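/- Let (r,c) be a graphical bipartite degree sequence on parts of sizes m and n, and let δ_r, Δ_r be the minimum and maximum entries of r and δ_c, Δ_c the minimum and maximum entries of c. If (Δ_c − δ_c − 1)(Δ_r − δ_r − 1) < 1 + max{δ_c(n − Δ_r), δ_r(m − Δ_c)}, then k_JS(r,c) ≤ 8; that is, every graph in G'(r,c) can be transformed into an element of G(r,c) by at most 8 JS-adjacent steps within G'(r,c). -/

import Mathlib

/-- A bipartite graph on parts `{1,…,m}` and `{1,…,n}`, given by its set of
edges (each edge has one endpoint in each part). -/
abbrev BipGraph (m n : ℕ) := Finset (Fin m × Fin n)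

/-- Degree of vertex `i ∈ V` (the part of size `m`). -/
def degV {m n : ℕ} (B : BipGraph m n) (i : Fin m) : ℕ :=
  (B.filter (fun e => e.1 = i)).card

/-- Degree of vertex `j ∈ U` (the part of size `n`). -/
def degU {m n : ℕ} (B : BipGraph m n) (j : Fin n) : ℕ :=
  (B.filter (fun e => e.2 = j)).card

/-- `B ∈ 𝒢(r,c)`: the vertices of `V` have degrees `r` and the vertices of `U`
have degrees `c`. -/
def memB {m n : ℕ} (r : Fin m → ℕ) (c : Fin n → ℕ) (B : BipGraph m n) : Prop :=
  (∀ i, degV B i = r i) ∧ (∀ j, degU B j = c j)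

/-- `B ∈ 𝒢'(r,c)`: either `B ∈ 𝒢(r,c)`, or there are `x ∈ V` and `y ∈ U` such
that `x` has degree `r x − 1`, `y` has degree `c y − 1`, and all other degrees
agree with `(r,c)`. -/
def memB' {m n : ℕ} (r : Fin m → ℕ) (c : Fin n → ℕ) (B : BipGraph m n) : Prop :=
  memB r c B ∨
    ∃ (x : Fin m) (y : Fin n), degV B x + 1 = r x ∧ degU B y + 1 = c y ∧
      (∀ i, i ≠ x → degV B i = r i) ∧ (∀ j, j ≠ y → degU B j = c j)

/-- A single (directed) move of the bipartite Jerrum–Sinclair chain. -/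
def bjsStep {m n : ℕ} (r : Fin m → ℕ) (c : Fin n → ℕ) (B B' : BipGraph m n) : Prop :=
  (memB r c B ∧ ∃ e ∈ B, B' = B.erase e) ∨
  (¬ memB r c B ∧ ∃ (i : Fin m) (j : Fin n), (i, j) ∉ B ∧
      degV B i < r i ∧ degU B j < c j ∧ B' = insert (i, j) B) ∨
  (¬ memB r c B ∧ ∃ (i : Fin m) (j : Fin n) (k : Fin m), (i, j) ∉ B ∧
      degV B i < r i ∧ degU B j = c j ∧ (k, j) ∈ B ∧
      B' = (insert (i, j) B).erase (k, j))

/-- `B` and `B'` are JS adjacent. -/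
def bjsAdj {m n : ℕ} (r : Fin m → ℕ) (c : Fin n → ℕ) (B B' : BipGraph m n) : Prop :=
  bjsStep r c B B' ∨ bjsStep r c B' B

/-- There is a walk of exactly `t` JS-adjacent steps from `B` to `B'`, all of
whose states lie in `𝒢'(r,c)`. -/
def bjsChain {m n : ℕ} (r : Fin m → ℕ) (c : Fin n → ℕ) (t : ℕ) (B B' : BipGraph m n) : Prop :=
  ∃ f : ℕ → BipGraph m n, f 0 = B ∧ f t = B' ∧
    (∀ i ≤ t, memB' r c (f i)) ∧ (∀ i < t, bjsAdj r c (f i) (f (i+1)))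

/-- The JS distance between `B` and `B'` (within `𝒢'(r,c)`) is at most `k`. -/
def bjsDistLe {m n : ℕ} (r : Fin m → ℕ) (c : Fin n → ℕ) (k : ℕ) (B B' : BipGraph m n) : Prop :=
  ∃ t ≤ k, bjsChain r c t B B'


section Helpers
variable {m n : ℕ} {r : Fin m → ℕ} {c : Fin n → ℕ}



lemma degV_insert_eq (B : BipGraph m n) (e : Fin m × Fin n) (he : e ∉ B) :
    degV (insert e B) e.1 = degV B e.1 + 1 := by
  unfold degV
  rw [Finset.filter_insert, if_pos rfl, Finset.card_insert_of_notMem (fun h => he (Finset.mem_filter.mp h).1)]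

lemma degV_insert_ne (B : BipGraph m n) (e : Fin m × Fin n) (i : Fin m) (h : e.1 ≠ i) :
    degV (insert e B) i = degV B i := by
  unfold degV
  rw [Finset.filter_insert, if_neg h]

lemma degU_insert_eq (B : BipGraph m n) (e : Fin m × Fin n) (he : e ∉ B) :
    degU (insert e B) e.2 = degU B e.2 + 1 := by
  unfold degU
  rw [Finset.filter_insert, if_pos rfl, Finset.card_insert_of_notMem (fun h => he (Finset.mem_filter.mp h).1)]

lemma degU_insert_ne (B : BipGraph m n) (e : Fin m × Fin n) (j : Fin n) (h : e.2 ≠ j) :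
    degU (insert e B) j = degU B j := by
  unfold degU
  rw [Finset.filter_insert, if_neg h]

lemma degV_erase_eq (B : BipGraph m n) (e : Fin m × Fin n) (he : e ∈ B) :
    degV (B.erase e) e.1 + 1 = degV B e.1 := by
  unfold degV
  rw [Finset.filter_erase]
  exact Finset.card_erase_add_one (Finset.mem_filter.mpr ⟨he, rfl⟩)

lemma degV_erase_ne (B : BipGraph m n) (e : Fin m × Fin n) (i : Fin m) (h : e.1 ≠ i) :
    degV (B.erase e) i = degV B i := by
  unfold degV
  rw [Finset.filter_erase]
  have : e ∉ B.filter (fun e => e.1 = i) := fun hh => h (Finset.mem_filter.mp hh).2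
  rw [Finset.erase_eq_of_notMem this]

lemma degU_erase_eq (B : BipGraph m n) (e : Fin m × Fin n) (he : e ∈ B) :
    degU (B.erase e) e.2 + 1 = degU B e.2 := by
  unfold degU
  rw [Finset.filter_erase]
  exact Finset.card_erase_add_one (Finset.mem_filter.mpr ⟨he, rfl⟩)

lemma degU_erase_ne (B : BipGraph m n) (e : Fin m × Fin n) (j : Fin n) (h : e.2 ≠ j) :
    degU (B.erase e) j = degU B j := by
  unfold degU
  rw [Finset.filter_erase]
  have : e ∉ B.filter (fun e => e.2 = j) := fun hh => h (Finset.mem_filter.mp hh).2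
  rw [Finset.erase_eq_of_notMem this]

lemma degV_card_nbr (B : BipGraph m n) (i : Fin m) :
    degV B i = (Finset.univ.filter (fun j => (i, j) ∈ B)).card := by
  unfold degV
  apply Finset.card_bij (fun e _ => e.2)
  · intro e he
    simp only [Finset.mem_filter] at he ⊢
    exact ⟨Finset.mem_univ _, by rw [show (i, e.2) = e from Prod.ext he.2.symm rfl]; exact he.1⟩
  · intro e1 h1 e2 h2 hh
    simp only [Finset.mem_filter] at h1 h2
    exact Prod.ext (h1.2.trans h2.2.symm) hh
  · intro j hj
    simp only [Finset.mem_filter] at hj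
    exact ⟨(i, j), Finset.mem_filter.mpr ⟨hj.2, rfl⟩, rfl⟩

lemma degU_card_nbr (B : BipGraph m n) (j : Fin n) :
    degU B j = (Finset.univ.filter (fun i => (i, j) ∈ B)).card := by
  unfold degU
  apply Finset.card_bij (fun e _ => e.1)
  · intro e he
    simp only [Finset.mem_filter] at he ⊢
    exact ⟨Finset.mem_univ _, by rw [show (e.1, j) = e from Prod.ext rfl he.2.symm]; exact he.1⟩
  · intro e1 h1 e2 h2 hh
    simp only [Finset.mem_filter] at h1 h2
    exact Prod.ext hh (h1.2.trans h2.2.symm)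
  · intro i hi
    simp only [Finset.mem_filter] at hi
    exact ⟨(i, j), Finset.mem_filter.mpr ⟨hi.2, rfl⟩, rfl⟩

lemma bjsChain_zero {B : BipGraph m n} (h : memB' r c B) : bjsChain r c 0 B B :=
  ⟨fun _ => B, rfl, rfl, fun _ _ => h, fun i hi => absurd hi (Nat.not_lt_zero i)⟩

lemma bjsChain_cons {B B1 B2 : BipGraph m n} {t : ℕ} (hB : memB' r c B)
    (hadj : bjsAdj r c B B1) (hch : bjsChain r c t B1 B2) :
    bjsChain r c (t + 1) B B2 := by
  obtain ⟨f, hf0, hft, hmem, hstep⟩ := hch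
  refine ⟨fun i => if i = 0 then B else f (i - 1), rfl, ?_, ?_, ?_⟩
  · simp [Nat.succ_ne_zero, hft]
  · intro i hi
    rcases Nat.eq_zero_or_pos i with h0 | h0
    · simp [h0, hB]
    · have : i ≠ 0 := Nat.pos_iff_ne_zero.mp h0
      simp only [this, if_neg, ite_false]
      exact hmem (i - 1) (by omega)
  · intro i hi
    rcases Nat.eq_zero_or_pos i with h0 | h0
    · subst h0
      simpa [hf0] using hadj
    · have h1 : i ≠ 0 := Nat.pos_iff_ne_zero.mp h0
      have h2 : i + 1 ≠ 0 := Nat.succ_ne_zero i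
      simp only [h1, h2, ite_false]
      have : i - 1 + 1 = i + 1 - 1 := by omega
      rw [show i + 1 - 1 = (i-1) + 1 from by omega]
      exact hstep (i - 1) (by omega)

lemma swap_facts {B : BipGraph m n} {x k : Fin m} {y j : Fin n}
    (hx : degV B x + 1 = r x) (hy : degU B y + 1 = c y)
    (hVi : ∀ i, i ≠ x → degV B i = r i) (hUj : ∀ j', j' ≠ y → degU B j' = c j')
    (hxj : (x, j) ∉ B) (hkj : (k, j) ∈ B) (hjy : j ≠ y) :
    bjsStep r c B ((insert (x, j) B).erase (k, j)) ∧
    degV ((insert (x, j) B).erase (k, j)) k + 1 = r k ∧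
    degU ((insert (x, j) B).erase (k, j)) y + 1 = c y ∧
    (∀ i, i ≠ k → degV ((insert (x, j) B).erase (k, j)) i = r i) ∧
    (∀ j', j' ≠ y → degU ((insert (x, j) B).erase (k, j)) j' = c j') ∧
    (∀ e, e ∈ (insert (x, j) B).erase (k, j) ↔ (e ∈ B ∧ e ≠ (k, j)) ∨ e = (x, j)) := by
  have hkx : k ≠ x := fun h => hxj (h ▸ hkj)
  have hnB : ¬ memB r c B := fun h => by have := h.1 x; omega
  have hkj' : (k, j) ∈ insert (x, j) B := Finset.mem_insert_of_mem hkj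
  set B1 := (insert (x, j) B).erase (k, j) with hB1
  have hmemiff : ∀ e, e ∈ B1 ↔ (e ∈ B ∧ e ≠ (k, j)) ∨ e = (x, j) := by
    intro e
    rw [hB1, Finset.mem_erase, Finset.mem_insert]
    constructor
    · rintro ⟨hne, heq | hmem⟩
      · exact Or.inr heq
      · exact Or.inl ⟨hmem, hne⟩
    · rintro (⟨hmem, hne⟩ | heq)
      · exact ⟨hne, Or.inr hmem⟩
      · refine ⟨?_, Or.inl heq⟩
        rintro rfl
        exact hxj (heq ▸ hkj)
  have hdVx : degV B1 x = r x := by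
    have h1 : degV (insert (x, j) B) x = degV B x + 1 := degV_insert_eq B (x, j) hxj
    have h2 : degV B1 x = degV (insert (x, j) B) x :=
      degV_erase_ne (insert (x, j) B) (k, j) x hkx
    omega
  have hdVk : degV B1 k + 1 = r k := by
    have h1 : degV B1 k + 1 = degV (insert (x, j) B) k :=
      degV_erase_eq (insert (x, j) B) (k, j) hkj'
    have h2 : degV (insert (x, j) B) k = degV B k :=
      degV_insert_ne B (x, j) k (fun h => hkx h.symm)
    have h3 : degV B k = r k := hVi k hkx
    omega
  have hdVi : ∀ i, i ≠ k → degV B1 i = r i := by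
    intro i hik
    by_cases hix : i = x
    · rw [hix]; exact hdVx
    · have h1 : degV B1 i = degV (insert (x, j) B) i :=
        degV_erase_ne (insert (x, j) B) (k, j) i (fun h => hik h.symm)
      have h2 : degV (insert (x, j) B) i = degV B i :=
        degV_insert_ne B (x, j) i (fun h => hix h.symm)
      rw [h1, h2]; exact hVi i hix
  have hdUj : degU B1 j = c j := by
    have h1 : degU B1 j + 1 = degU (insert (x, j) B) j :=
      degU_erase_eq (insert (x, j) B) (k, j) hkj'
    have h2 : degU (insert (x, j) B) j = degU B j + 1 := degU_insert_eq B (x, j) hxj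
    have h3 : degU B j = c j := hUj j hjy
    omega
  have hdUj' : ∀ j', j' ≠ y → degU B1 j' = c j' := by
    intro j' hj'y
    by_cases hjj : j' = j
    · rw [hjj]; exact hdUj
    · have h1 : degU B1 j' = degU (insert (x, j) B) j' :=
        degU_erase_ne (insert (x, j) B) (k, j) j' (fun h => hjj h.symm)
      have h2 : degU (insert (x, j) B) j' = degU B j' :=
        degU_insert_ne B (x, j) j' (fun h => hjj h.symm)
      rw [h1, h2]; exact hUj j' hj'y
  have hdUy : degU B1 y + 1 = c y := by
    have h1 : degU B1 y = degU (insert (x, j) B) y :=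
      degU_erase_ne (insert (x, j) B) (k, j) y hjy
    have h2 : degU (insert (x, j) B) y = degU B y := degU_insert_ne B (x, j) y hjy
    omega
  exact ⟨Or.inr (Or.inr ⟨hnB, x, j, k, hxj, by omega, hUj j hjy, hkj, rfl⟩),
    hdVk, hdUy, hdVi, hdUj', hmemiff⟩

lemma fill_facts {B : BipGraph m n} {x : Fin m} {y : Fin n}
    (hx : degV B x + 1 = r x) (hy : degU B y + 1 = c y)
    (hVi : ∀ i, i ≠ x → degV B i = r i) (hUj : ∀ j', j' ≠ y → degU B j' = c j')
    (hxy : (x, y) ∉ B) :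
    bjsStep r c B (insert (x, y) B) ∧ memB r c (insert (x, y) B) := by
  have hnB : ¬ memB r c B := fun h => by have := h.1 x; omega
  refine ⟨Or.inr (Or.inl ⟨hnB, x, y, hxy, by omega, by omega, rfl⟩), ?_, ?_⟩
  · intro i
    by_cases hix : i = x
    · rw [hix]
      have h1 : degV (insert (x, y) B) x = degV B x + 1 := degV_insert_eq B (x, y) hxy
      omega
    · have h1 : degV (insert (x, y) B) i = degV B i :=
        degV_insert_ne B (x, y) i (fun h => hix h.symm)
      rw [h1]; exact hVi i hix
  · intro j
    by_cases hjy : j = y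
    · rw [hjy]
      have h1 : degU (insert (x, y) B) y = degU B y + 1 := degU_insert_eq B (x, y) hxy
      omega
    · have h1 : degU (insert (x, y) B) j = degU B j :=
        degU_insert_ne B (x, y) j (fun h => hjy h.symm)
      rw [h1]; exact hUj j hjy

lemma endgame1 {Dc dc Dr dr w k t s Mc N : ℤ}
    (h1 : w + 2 ≤ Dr) (h2 : k + 2 ≤ Dc) (h3 : dr ≤ w) (h4 : dc ≤ k)
    (h5 : t + w + 2 ≤ Dr) (h6 : s + k + 2 ≤ Dc) (h7 : 0 ≤ t) (h8 : 0 ≤ s)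
    (h9 : Mc + w + 1 = N)
    (hw : dc * Mc ≤ s * t + t + k * (Dr - 1 - w))
    (hcase : (Dc - dc - 1) * (Dr - dr - 1) ≤ dc * (N - Dr)) : False := by
  have p1 : (0 : ℤ) ≤ (Dc - 1 - k - 1 - s) * t := mul_nonneg (by linarith) h7
  have p2 : (0 : ℤ) ≤ (Dc - 1 - k) * (Dr - 1 - w - 1 - t) :=
    mul_nonneg (by linarith) (by linarith)
  have p3 : (0 : ℤ) ≤ (Dc - dc - 1) * (w - dr) := mul_nonneg (by linarith) (by linarith)
  have p0 : dc * (N - Dr) = dc * Mc - dc * (Dr - 1 - w) := by rw [← h9]; ring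
  nlinarith [hw, hcase, p0, p1, p2, p3]

lemma core_contradiction (δr Δr δc Δc : ℕ)
    (hgraphical : ∃ B : BipGraph m n, memB r c B)
    (hδr : ∀ i, δr ≤ r i) (hΔr : ∀ i, r i ≤ Δr)
    (hδc : ∀ j, δc ≤ c j) (hΔc : ∀ j, c j ≤ Δc)
    (hrpos : ∀ i, 1 ≤ r i) (hcpos : ∀ j, 1 ≤ c j)
    (hineq : ((Δc : ℤ) - (δc : ℤ) - 1) * ((Δr : ℤ) - (δr : ℤ) - 1) <
      1 + max ((δc : ℤ) * ((n : ℤ) - (Δr : ℤ))) ((δr : ℤ) * ((m : ℤ) - (Δc : ℤ))))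
    {B : BipGraph m n} {x : Fin m} {y : Fin n}
    (hx : degV B x + 1 = r x) (hy : degU B y + 1 = c y)
    (hVi : ∀ i, i ≠ x → degV B i = r i) (hUj : ∀ j', j' ≠ y → degU B j' = c j')
    (hxy : (x, y) ∈ B)
    (hP1 : ¬ ∃ (j : Fin n) (k : Fin m), (x, j) ∉ B ∧ (k, j) ∈ B ∧ (k, y) ∉ B)
    (hP2 : ¬ ∃ (j1 : Fin n) (k1 : Fin m) (j2 : Fin n) (k2 : Fin m),
      (x, j1) ∉ B ∧ (k1, j1) ∈ B ∧ j2 ≠ y ∧ j2 ≠ j1 ∧ (k1, j2) ∉ B ∧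
      (k2, j2) ∈ B ∧ (k2, y) ∉ B) : False := by
  push_neg at hP1 hP2
  -- Basic global degree bounds from an actual realization
  obtain ⟨B₀, hB₀V, hB₀U⟩ := hgraphical
  have hrn : ∀ i, r i ≤ n := fun i => by
    rw [← hB₀V i, degV_card_nbr]
    exact le_trans (Finset.card_le_card (Finset.filter_subset _ _)) (by simp)
  have hcm : ∀ j, c j ≤ m := fun j => by
    rw [← hB₀U j, degU_card_nbr]
    exact le_trans (Finset.card_le_card (Finset.filter_subset _ _)) (by simp)
  -- The key finsets
  set S : Finset (Fin m) := Finset.univ.filter (fun i => (i, y) ∈ B) with hS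
  set W : Finset (Fin n) := Finset.univ.filter (fun j => ∃ i, (i, y) ∉ B ∧ (i, j) ∈ B) with hW
  set K : Finset (Fin m) := Finset.univ.filter (fun i => i ≠ x ∧ ∃ z, (x, z) ∉ B ∧ (i, z) ∈ B)
    with hK
  have hmemS : ∀ i, i ∈ S ↔ (i, y) ∈ B := fun i => by simp [hS]
  have hmemW : ∀ j, j ∈ W ↔ ∃ i, (i, y) ∉ B ∧ (i, j) ∈ B := fun j => by simp [hW]
  have hmemK : ∀ i, i ∈ K ↔ i ≠ x ∧ ∃ z, (x, z) ∉ B ∧ (i, z) ∈ B := fun i => by simp [hK]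
  have hxS : x ∈ S := (hmemS x).mpr hxy
  have hyW : y ∉ W := fun h => by obtain ⟨i, h1, h2⟩ := (hmemW y).mp h; exact h1 h2
  -- Fact 1
  have fact1 : ∀ j ∈ W, (x, j) ∈ B := by
    intro j hj
    obtain ⟨i, hiy, hij⟩ := (hmemW j).mp hj
    by_contra h
    exact hiy (hP1 j i h hij)
  -- Fact 2
  have fact2 : ∀ i ∈ K, (i, y) ∈ B := by
    intro i hi
    obtain ⟨_, z, hxz, hiz⟩ := (hmemK i).mp hi
    by_contra h
    exact h (hP1 z i hxz hiz)
  -- Fact 3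
  have fact3 : ∀ i ∈ K, ∀ j ∈ W, (i, j) ∈ B := by
    intro i hi j hj
    obtain ⟨hix, z, hxz, hiz⟩ := (hmemK i).mp hi
    obtain ⟨i', hi'y, hi'j⟩ := (hmemW j).mp hj
    have hjy : j ≠ y := fun h => hyW (h ▸ hj)
    have hjz : j ≠ z := fun h => hxz (h ▸ fact1 j hj)
    by_contra h
    exact hi'y (hP2 z i j i' hxz hiz hjy hjz h hi'j)
  -- neighborhoods
  set Nx : Finset (Fin n) := Finset.univ.filter (fun j => (x, j) ∈ B) with hNx
  have hNxcard : Nx.card + 1 = r x := by rw [hNx, ← degV_card_nbr]; exact hx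
  have hcardS : S.card + 1 = c y := by rw [hS, ← degU_card_nbr]; exact hy
  -- a row outside S
  obtain ⟨i0, hi0⟩ : ∃ i0, i0 ∉ S := by
    have h1 : S.card < m := by have := hcm y; omega
    have h2 : (Sᶜ : Finset (Fin m)).Nonempty := by
      rw [← Finset.card_pos, Finset.card_compl]
      simpa using by omega
    obtain ⟨i1, hi1c⟩ := h2
    exact ⟨i1, fun h => (Finset.mem_compl.mp hi1c) h⟩
  have hi0y : (i0, y) ∉ B := fun h => hi0 ((hmemS i0).mpr h)
  have hi0x : i0 ≠ x := fun h => hi0 (h ▸ hxS)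
  -- a column outside N(x)
  obtain ⟨z0, hz0⟩ : ∃ z0, (x, z0) ∉ B := by
    have h1 : Nx.card < n := by have := hrn x; omega
    have h2 : (Nxᶜ : Finset (Fin n)).Nonempty := by
      rw [← Finset.card_pos, Finset.card_compl]
      simpa using by omega
    obtain ⟨z0, hz0c⟩ := h2
    have h3 := Finset.mem_compl.mp hz0c
    exact ⟨z0, fun h => h3 (Finset.mem_filter.mpr ⟨Finset.mem_univ _, h⟩)⟩
  have hz0y : z0 ≠ y := fun h => hz0 (h ▸ hxy)
  -- row i0 has all its neighbors in W
  have hrowi0 : Finset.univ.filter (fun j => (i0, j) ∈ B) ⊆ W := by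
    intro j hj
    simp only [Finset.mem_filter, Finset.mem_univ, true_and] at hj
    exact (hmemW j).mpr ⟨i0, hi0y, hj⟩
  have hδrw : δr ≤ W.card := by
    have h1 : r i0 ≤ W.card := by
      rw [← hVi i0 hi0x, degV_card_nbr]
      exact Finset.card_le_card hrowi0
    exact le_trans (hδr i0) h1
  have hWne : W.Nonempty := by
    have h1 : 1 ≤ r i0 := hrpos i0
    have h2 : r i0 ≤ W.card := by
      rw [← hVi i0 hi0x, degV_card_nbr]
      exact Finset.card_le_card hrowi0
    exact Finset.card_pos.mp (by omega)
  -- column z0 has all its rows in K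
  have hcolz0 : Finset.univ.filter (fun i => (i, z0) ∈ B) ⊆ K := by
    intro i hi
    simp only [Finset.mem_filter, Finset.mem_univ, true_and] at hi
    exact (hmemK i).mpr ⟨fun h => hz0 (h ▸ hi), z0, hz0, hi⟩
  have hδcκ : δc ≤ K.card := by
    have h1 : c z0 ≤ K.card := by
      rw [← hUj z0 hz0y, degU_card_nbr]
      exact Finset.card_le_card hcolz0
    exact le_trans (hδc z0) h1
  have hKS : K ⊆ S := fun i hi => (hmemS i).mpr (fact2 i hi)
  have hxK : x ∉ K := fun h => ((hmemK x).mp h).1 rfl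
  have hxKS : insert x K ⊆ S := by
    intro i hi
    rcases Finset.mem_insert.mp hi with h | h
    · exact h ▸ hxS
    · exact hKS h
  have hκS : K.card + 1 ≤ S.card := by
    have := Finset.card_le_card hxKS
    rwa [Finset.card_insert_of_notMem hxK] at this
  -- W ∪ {y} inside N(x)
  have hyNx : y ∈ Nx := by rw [hNx]; simp [hxy]
  have hWNx : W ⊆ Nx := by
    intro j hj
    rw [hNx]
    simp only [Finset.mem_filter, Finset.mem_univ, true_and]
    exact fact1 j hj
  have hyWNx : insert y W ⊆ Nx := by
    intro j hj
    rcases Finset.mem_insert.mp hj with h | h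
    · exact h ▸ hyNx
    · exact hWNx h
  have hwrx : W.card + 2 ≤ r x := by
    have := Finset.card_le_card hyWNx
    rw [Finset.card_insert_of_notMem hyW] at this
    omega
  have hwΔr : W.card + 2 ≤ Δr := le_trans hwrx (hΔr x)
  have hκΔc : K.card + 2 ≤ Δc := by
    obtain ⟨j0, hj0⟩ := hWne
    obtain ⟨i', hi'y, hi'j0⟩ := (hmemW j0).mp hj0
    have hi'S : i' ∉ S := fun h => hi'y ((hmemS i').mp h)
    have hi'xK : i' ∉ insert x K := fun h => hi'S (hxKS h)
    have hsub : insert i' (insert x K) ⊆ Finset.univ.filter (fun i => (i, j0) ∈ B) := by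
      intro i hi
      simp only [Finset.mem_filter, Finset.mem_univ, true_and]
      rcases Finset.mem_insert.mp hi with h | h
      · exact h ▸ hi'j0
      · rcases Finset.mem_insert.mp h with h' | h'
        · exact h' ▸ fact1 j0 hj0
        · exact fact3 i h' j0 hj0
    have hj0y : j0 ≠ y := fun h => hyW (h ▸ hj0)
    have h1 := Finset.card_le_card hsub
    rw [Finset.card_insert_of_notMem hi'xK, Finset.card_insert_of_notMem hxK] at h1
    have h2 : (Finset.univ.filter (fun i => (i, j0) ∈ B)).card = c j0 := by
      rw [← degU_card_nbr]; exact hUj j0 hj0y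
    have := hΔc j0
    omega
  -- T' and S0
  set T' : Finset (Fin n) := Finset.univ.filter (fun j => (x, j) ∈ B ∧ j ≠ y ∧ j ∉ W) with hT'
  have hT'eq : T' = Nx \ insert y W := by
    ext j
    rw [hT', hNx]
    simp only [Finset.mem_filter, Finset.mem_univ, true_and, Finset.mem_sdiff,
      Finset.mem_insert]
    tauto
  have hT'card : T'.card + (W.card + 1) + 1 = r x := by
    rw [hT'eq, Finset.card_sdiff_of_subset hyWNx, Finset.card_insert_of_notMem hyW]
    have := Finset.card_le_card hyWNx
    rw [Finset.card_insert_of_notMem hyW] at this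
    omega
  set S0 : Finset (Fin m) := S \ insert x K with hS0
  have hS0card : S0.card + (K.card + 1) + 1 = c y := by
    rw [hS0, Finset.card_sdiff_of_subset hxKS, Finset.card_insert_of_notMem hxK]
    have := Finset.card_le_card hxKS
    rw [Finset.card_insert_of_notMem hxK] at this
    omega
  set M : Finset (Fin n) := Finset.univ.filter (fun j => j ≠ y ∧ j ∉ W) with hM
  have hMcard : M.card + (W.card + 1) = n := by
    have hMeq : M = Finset.univ \ insert y W := by
      ext j
      rw [hM]
      simp only [Finset.mem_filter, Finset.mem_univ, true_and, Finset.mem_sdiff,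
        Finset.mem_insert]
      tauto
    rw [hMeq, Finset.card_sdiff_of_subset (Finset.subset_univ _), Finset.card_insert_of_notMem hyW]
    have : (insert y W).card ≤ n := by
      simpa using Finset.card_le_card (Finset.subset_univ (insert y W))
    rw [Finset.card_insert_of_notMem hyW] at this
    simp only [Finset.card_univ, Fintype.card_fin]
    omega
  -- The edge set E1 : edges into columns outside {y} ∪ W
  set E1 : BipGraph m n := B.filter (fun e => e.2 ≠ y ∧ e.2 ∉ W) with hE1
  -- column-wise lower bound
  have hcol1 : δc * M.card ≤ E1.card := by
    have hfib : E1.card = ∑ j ∈ M, (E1.filter (fun e => e.2 = j)).card := by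
      apply Finset.card_eq_sum_card_fiberwise
      intro e he
      rw [hE1] at he
      simp only [Finset.mem_coe, Finset.mem_filter] at he
      rw [hM]
      simp only [Finset.mem_coe, Finset.mem_filter, Finset.mem_univ, true_and]
      exact he.2
    have hpt : ∀ j ∈ M, δc ≤ (E1.filter (fun e => e.2 = j)).card := by
      intro j hj
      rw [hM] at hj
      simp only [Finset.mem_filter, Finset.mem_univ, true_and] at hj
      have hsub : B.filter (fun e => e.2 = j) ⊆ E1.filter (fun e => e.2 = j) := by
        intro e he
        simp only [Finset.mem_filter] at he ⊢
        refine ⟨?_, he.2⟩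
        rw [hE1]
        simp only [Finset.mem_filter]
        exact ⟨he.1, he.2 ▸ hj⟩
      have h1 : degU B j = c j := hUj j hj.1
      have h2 : δc ≤ (B.filter (fun e => e.2 = j)).card := by
        unfold degU at h1
        rw [h1]
        exact hδc j
      exact le_trans h2 (Finset.card_le_card hsub)
    calc δc * M.card = ∑ _j ∈ M, δc := by rw [Finset.sum_const, smul_eq_mul, mul_comm]
    _ ≤ ∑ j ∈ M, (E1.filter (fun e => e.2 = j)).card := Finset.sum_le_sum hpt
    _ = E1.card := hfib.symm
  -- row-wise upper bound
  have hrow1 : E1.card ≤ S0.card * T'.card + T'.card + K.card * (Δr - (W.card + 1)) := by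
    set F : Fin m → ℕ := fun i => (E1.filter (fun e => e.1 = i)).card with hF
    have hfib : E1.card = ∑ i ∈ Finset.univ, F i := by
      apply Finset.card_eq_sum_card_fiberwise
      intro e _
      exact Finset.mem_univ _
    have bound_a : ∀ i, i ∉ S → F i = 0 := by
      intro i hiS
      show (E1.filter (fun e => e.1 = i)).card = 0
      simp only [Finset.card_eq_zero]
      rw [Finset.filter_eq_empty_iff]
      intro e he
      rw [hE1] at he
      simp only [Finset.mem_filter] at he
      intro h1
      apply he.2.2
      apply (hmemW e.2).mpr
      refine ⟨i, fun h => hiS ((hmemS i).mpr h), ?_⟩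
      have : (i, e.2) = e := by rw [← h1]
      rw [this]
      exact he.1
    have bound_b : ∀ i, i ∈ insert x K → F i + (W.card + 1) ≤ degV B i := by
      intro i hi
      have hiy : (i, y) ∈ B := by
        rcases Finset.mem_insert.mp hi with h | h
        · exact h ▸ hxy
        · exact fact2 i h
      have hiW : ∀ j ∈ W, (i, j) ∈ B := by
        intro j hj
        rcases Finset.mem_insert.mp hi with h | h
        · exact h ▸ fact1 j hj
        · exact fact3 i h j hj
      set G : BipGraph m n := (insert y W).image (fun j => (i, j)) with hG
      have hGcard : G.card = W.card + 1 := by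
        rw [hG, Finset.card_image_of_injective _ (fun a b h => (Prod.mk.injEq i a i b).mp h |>.2),
          Finset.card_insert_of_notMem hyW]
      have hGsub : G ⊆ B.filter (fun e => e.1 = i) := by
        intro e he
        rw [hG] at he
        obtain ⟨j, hj, hje⟩ := Finset.mem_image.mp he
        simp only [Finset.mem_filter]
        rw [← hje]
        refine ⟨?_, rfl⟩
        rcases Finset.mem_insert.mp hj with h | h
        · exact h ▸ hiy
        · exact hiW j h
      have hE1sub : E1.filter (fun e => e.1 = i) ⊆ B.filter (fun e => e.1 = i) := by
        intro e he
        simp only [Finset.mem_filter] at he ⊢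
        refine ⟨?_, he.2⟩
        have := he.1
        rw [hE1] at this
        exact (Finset.mem_filter.mp this).1
      have hdisj : Disjoint G (E1.filter (fun e => e.1 = i)) := by
        rw [Finset.disjoint_left]
        intro e heG heE
        rw [hG] at heG
        obtain ⟨j, hj, hje⟩ := Finset.mem_image.mp heG
        simp only [Finset.mem_filter] at heE
        have h2 := heE.1
        rw [hE1] at h2
        simp only [Finset.mem_filter] at h2
        rcases Finset.mem_insert.mp hj with h | h
        · exact h2.2.1 (by rw [← hje, ← h])
        · exact h2.2.2 (by rw [← hje]; exact h)
      have hunion : (G ∪ E1.filter (fun e => e.1 = i)).card ≤ degV B i := by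
        unfold degV
        apply Finset.card_le_card
        intro e he
        rcases Finset.mem_union.mp he with h | h
        · exact hGsub h
        · exact hE1sub h
      rw [Finset.card_union_of_disjoint hdisj, hGcard] at hunion
      show (E1.filter (fun e => e.1 = i)).card + (W.card + 1) ≤ degV B i
      omega
    have bound_c : ∀ i ∈ S0, F i ≤ T'.card := by
      intro i hi
      rw [hS0, Finset.mem_sdiff] at hi
      have hix : i ≠ x := fun h => hi.2 (h ▸ Finset.mem_insert_self x K)
      have hiK : i ∉ K := fun h => hi.2 (Finset.mem_insert_of_mem h)
      show (E1.filter (fun e => e.1 = i)).card ≤ T'.card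
      apply Finset.card_le_card_of_injOn (fun e => e.2)
      · intro e he
        simp only [Finset.mem_coe, Finset.mem_filter] at he
        have h2 := he.1
        rw [hE1] at h2
        simp only [Finset.mem_filter] at h2
        rw [hT']
        simp only [Finset.mem_coe, Finset.mem_filter, Finset.mem_univ, true_and]
        refine ⟨?_, h2.2.1, h2.2.2⟩
        by_contra hxe2
        apply hiK
        apply (hmemK i).mpr
        refine ⟨hix, e.2, hxe2, ?_⟩
        have : (i, e.2) = e := by rw [← he.2]
        rw [this]
        exact h2.1
      · intro e1 h1 e2 h2 hee
        simp only [Finset.mem_coe, Finset.mem_filter] at h1 h2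
        exact Prod.ext (h1.2.trans h2.2.symm) hee
    -- assemble
    have hsplit : ∑ i ∈ Finset.univ, F i
        = ∑ i ∈ Finset.univ \ insert x K, F i + ∑ i ∈ insert x K, F i :=
      (Finset.sum_sdiff (Finset.subset_univ _)).symm
    have hins : ∑ i ∈ insert x K, F i = F x + ∑ i ∈ K, F i := Finset.sum_insert hxK
    have hKsum : ∑ i ∈ K, F i ≤ K.card * (Δr - (W.card + 1)) := by
      have hpt : ∀ i ∈ K, F i ≤ Δr - (W.card + 1) := by
        intro i hi
        have h1 := bound_b i (Finset.mem_insert_of_mem hi)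
        have hix : i ≠ x := ((hmemK i).mp hi).1
        have h2 : degV B i = r i := hVi i hix
        have h3 := hΔr i
        omega
      calc ∑ i ∈ K, F i ≤ ∑ _i ∈ K, (Δr - (W.card + 1)) := Finset.sum_le_sum hpt
      _ = K.card * (Δr - (W.card + 1)) := by rw [Finset.sum_const, smul_eq_mul]
    have hFx : F x ≤ T'.card := by
      have h1 := bound_b x (Finset.mem_insert_self x K)
      omega
    have hrest : ∑ i ∈ Finset.univ \ insert x K, F i ≤ S0.card * T'.card := by
      have hsub : S0 ⊆ Finset.univ \ insert x K := by
        intro i hi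
        rw [hS0, Finset.mem_sdiff] at hi
        exact Finset.mem_sdiff.mpr ⟨Finset.mem_univ _, hi.2⟩
      have hzero : ∀ i ∈ Finset.univ \ insert x K, i ∉ S0 → F i = 0 := by
        intro i hi hiS0
        apply bound_a
        intro hiS
        apply hiS0
        rw [hS0, Finset.mem_sdiff]
        exact ⟨hiS, (Finset.mem_sdiff.mp hi).2⟩
      have heq : ∑ i ∈ Finset.univ \ insert x K, F i = ∑ i ∈ S0, F i :=
        (Finset.sum_subset hsub hzero).symm
      rw [heq]
      calc ∑ i ∈ S0, F i ≤ ∑ _i ∈ S0, T'.card := Finset.sum_le_sum bound_c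
      _ = S0.card * T'.card := by rw [Finset.sum_const, smul_eq_mul]
    rw [hfib, hsplit, hins]
    linarith [hrest, hFx, hKsum]
  -- symmetric counting: rows outside {x} ∪ K
  set M' : Finset (Fin m) := Finset.univ.filter (fun i => i ≠ x ∧ i ∉ K) with hM'
  have hM'card : M'.card + (K.card + 1) = m := by
    have hM'eq : M' = Finset.univ \ insert x K := by
      ext i
      rw [hM']
      simp only [Finset.mem_filter, Finset.mem_univ, true_and, Finset.mem_sdiff,
        Finset.mem_insert]
      tauto
    rw [hM'eq, Finset.card_sdiff_of_subset (Finset.subset_univ _), Finset.card_insert_of_notMem hxK]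
    have : (insert x K).card ≤ m := by
      simpa using Finset.card_le_card (Finset.subset_univ (insert x K))
    rw [Finset.card_insert_of_notMem hxK] at this
    simp only [Finset.card_univ, Fintype.card_fin]
    omega
  set E2 : BipGraph m n := B.filter (fun e => e.1 ≠ x ∧ e.1 ∉ K) with hE2
  have hrow2 : δr * M'.card ≤ E2.card := by
    have hfib : E2.card = ∑ i ∈ M', (E2.filter (fun e => e.1 = i)).card := by
      apply Finset.card_eq_sum_card_fiberwise
      intro e he
      rw [hE2] at he
      simp only [Finset.mem_coe, Finset.mem_filter] at he
      rw [hM']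
      simp only [Finset.mem_coe, Finset.mem_filter, Finset.mem_univ, true_and]
      exact he.2
    have hpt : ∀ i ∈ M', δr ≤ (E2.filter (fun e => e.1 = i)).card := by
      intro i hi
      rw [hM'] at hi
      simp only [Finset.mem_filter, Finset.mem_univ, true_and] at hi
      have hsub : B.filter (fun e => e.1 = i) ⊆ E2.filter (fun e => e.1 = i) := by
        intro e he
        simp only [Finset.mem_filter] at he ⊢
        refine ⟨?_, he.2⟩
        rw [hE2]
        simp only [Finset.mem_filter]
        exact ⟨he.1, he.2 ▸ hi⟩
      have h1 : degV B i = r i := hVi i hi.1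
      have h2 : δr ≤ (B.filter (fun e => e.1 = i)).card := by
        unfold degV at h1
        rw [h1]
        exact hδr i
      exact le_trans h2 (Finset.card_le_card hsub)
    calc δr * M'.card = ∑ _i ∈ M', δr := by rw [Finset.sum_const, smul_eq_mul, mul_comm]
    _ ≤ ∑ i ∈ M', (E2.filter (fun e => e.1 = i)).card := Finset.sum_le_sum hpt
    _ = E2.card := hfib.symm
  have hcol2 : E2.card ≤ (T'.card + 1) * S0.card + W.card * (Δc - (K.card + 1)) := by
    set F' : Fin n → ℕ := fun j => (E2.filter (fun e => e.2 = j)).card with hF'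
    have hfib : E2.card = ∑ j ∈ Finset.univ, F' j := by
      apply Finset.card_eq_sum_card_fiberwise
      intro e _
      exact Finset.mem_univ _
    have bound_a' : ∀ j, (x, j) ∉ B → F' j = 0 := by
      intro j hxj
      show (E2.filter (fun e => e.2 = j)).card = 0
      simp only [Finset.card_eq_zero]
      rw [Finset.filter_eq_empty_iff]
      intro e he
      rw [hE2] at he
      simp only [Finset.mem_filter] at he
      intro h1
      apply he.2.2
      apply (hmemK e.1).mpr
      refine ⟨he.2.1, j, hxj, ?_⟩
      have : (e.1, j) = e := by rw [← h1]
      rw [this]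
      exact he.1
    have bound_b' : ∀ j ∈ W, F' j + (K.card + 1) ≤ degU B j := by
      intro j hj
      set G' : BipGraph m n := (insert x K).image (fun i => (i, j)) with hG'
      have hG'card : G'.card = K.card + 1 := by
        rw [hG', Finset.card_image_of_injective _
          (fun a b h => (Prod.mk.injEq a j b j).mp h |>.1),
          Finset.card_insert_of_notMem hxK]
      have hG'sub : G' ⊆ B.filter (fun e => e.2 = j) := by
        intro e he
        rw [hG'] at he
        obtain ⟨i, hi, hie⟩ := Finset.mem_image.mp he
        simp only [Finset.mem_filter]
        rw [← hie]
        refine ⟨?_, rfl⟩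
        rcases Finset.mem_insert.mp hi with h | h
        · exact h ▸ fact1 j hj
        · exact fact3 i h j hj
      have hE2sub : E2.filter (fun e => e.2 = j) ⊆ B.filter (fun e => e.2 = j) := by
        intro e he
        simp only [Finset.mem_filter] at he ⊢
        refine ⟨?_, he.2⟩
        have := he.1
        rw [hE2] at this
        exact (Finset.mem_filter.mp this).1
      have hdisj : Disjoint G' (E2.filter (fun e => e.2 = j)) := by
        rw [Finset.disjoint_left]
        intro e heG heE
        rw [hG'] at heG
        obtain ⟨i, hi, hie⟩ := Finset.mem_image.mp heG
        simp only [Finset.mem_filter] at heE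
        have h2 := heE.1
        rw [hE2] at h2
        simp only [Finset.mem_filter] at h2
        rcases Finset.mem_insert.mp hi with h | h
        · exact h2.2.1 (by rw [← hie, ← h])
        · exact h2.2.2 (by rw [← hie]; exact h)
      have hunion : (G' ∪ E2.filter (fun e => e.2 = j)).card ≤ degU B j := by
        unfold degU
        apply Finset.card_le_card
        intro e he
        rcases Finset.mem_union.mp he with h | h
        · exact hG'sub h
        · exact hE2sub h
      rw [Finset.card_union_of_disjoint hdisj, hG'card] at hunion
      show (E2.filter (fun e => e.2 = j)).card + (K.card + 1) ≤ degU B j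
      omega
    have bound_c' : ∀ j, (x, j) ∈ B → j ∉ W → F' j ≤ S0.card := by
      intro j hxj hjW
      show (E2.filter (fun e => e.2 = j)).card ≤ S0.card
      apply Finset.card_le_card_of_injOn (fun e => e.1)
      · intro e he
        simp only [Finset.mem_coe, Finset.mem_filter] at he
        have h2 := he.1
        rw [hE2] at h2
        simp only [Finset.mem_filter] at h2
        rw [hS0, Finset.mem_coe, Finset.mem_sdiff]
        constructor
        · apply (hmemS e.1).mpr
          by_contra hey
          apply hjW
          apply (hmemW j).mpr
          refine ⟨e.1, hey, ?_⟩
          have : (e.1, j) = e := by rw [← he.2]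
          rw [this]
          exact h2.1
        · intro hin
          rcases Finset.mem_insert.mp hin with h | h
          · exact h2.2.1 h
          · exact h2.2.2 h
      · intro e1 h1 e2 h2 hee
        simp only [Finset.mem_coe, Finset.mem_filter] at h1 h2
        exact Prod.ext hee (h1.2.trans h2.2.symm)
    -- assemble
    have hsplit : ∑ j ∈ Finset.univ, F' j
        = ∑ j ∈ Finset.univ \ W, F' j + ∑ j ∈ W, F' j :=
      (Finset.sum_sdiff (Finset.subset_univ _)).symm
    have hWsum : ∑ j ∈ W, F' j ≤ W.card * (Δc - (K.card + 1)) := by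
      have hpt : ∀ j ∈ W, F' j ≤ Δc - (K.card + 1) := by
        intro j hj
        have h1 := bound_b' j hj
        have hjy : j ≠ y := fun h => hyW (h ▸ hj)
        have h2 : degU B j = c j := hUj j hjy
        have h3 := hΔc j
        omega
      calc ∑ j ∈ W, F' j ≤ ∑ _j ∈ W, (Δc - (K.card + 1)) := Finset.sum_le_sum hpt
      _ = W.card * (Δc - (K.card + 1)) := by rw [Finset.sum_const, smul_eq_mul]
    have hrest : ∑ j ∈ Finset.univ \ W, F' j ≤ (T'.card + 1) * S0.card := by
      set NxW : Finset (Fin n) := (Finset.univ \ W).filter (fun j => (x, j) ∈ B) with hNxW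
      have hsub : NxW ⊆ Finset.univ \ W := Finset.filter_subset _ _
      have hzero : ∀ j ∈ Finset.univ \ W, j ∉ NxW → F' j = 0 := by
        intro j hj hjn
        apply bound_a'
        intro hxj
        exact hjn (Finset.mem_filter.mpr ⟨hj, hxj⟩)
      have heq : ∑ j ∈ Finset.univ \ W, F' j = ∑ j ∈ NxW, F' j :=
        (Finset.sum_subset hsub hzero).symm
      have hNxWcard : NxW.card = T'.card + 1 := by
        have hNxWeq : NxW = insert y T' := by
          ext j
          rw [hNxW, hT']
          simp only [Finset.mem_filter, Finset.mem_univ, true_and, Finset.mem_sdiff,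
            Finset.mem_insert]
          by_cases hjy : j = y
          · subst hjy
            simp [hxy, hyW]
          · constructor
            · rintro ⟨hjW, hxj⟩
              exact Or.inr ⟨hxj, hjy, hjW⟩
            · rintro (h | ⟨h1, _, h3⟩)
              · exact absurd h hjy
              · exact ⟨h3, h1⟩
        have hyT' : y ∉ T' := by
          rw [hT']
          simp only [Finset.mem_filter, Finset.mem_univ, true_and]
          exact fun h => h.2.1 rfl
        rw [hNxWeq, Finset.card_insert_of_notMem hyT']
      rw [heq]
      have hpt : ∀ j ∈ NxW, F' j ≤ S0.card := by
        intro j hj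
        rw [hNxW] at hj
        simp only [Finset.mem_filter, Finset.mem_sdiff, Finset.mem_univ, true_and] at hj
        exact bound_c' j hj.2 hj.1
      calc ∑ j ∈ NxW, F' j ≤ ∑ _j ∈ NxW, S0.card := Finset.sum_le_sum hpt
      _ = NxW.card * S0.card := by rw [Finset.sum_const, smul_eq_mul]
      _ = (T'.card + 1) * S0.card := by rw [hNxWcard]
    rw [hfib, hsplit]
    linarith [hrest, hWsum]
  -- ===== arithmetic endgame =====
  have hab : ((Δc : ℤ) - δc - 1) * ((Δr : ℤ) - δr - 1) ≤
      max ((δc : ℤ) * ((n : ℤ) - Δr)) ((δr : ℤ) * ((m : ℤ) - Δc)) := by linarith [hineq]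
  -- cast all needed facts to ℤ
  have hcw : (W.card : ℤ) + 2 ≤ (Δr : ℤ) := by exact_mod_cast hwΔr
  have hcκ : (K.card : ℤ) + 2 ≤ (Δc : ℤ) := by exact_mod_cast hκΔc
  have hcδr : (δr : ℤ) ≤ (W.card : ℤ) := by exact_mod_cast hδrw
  have hcδc : (δc : ℤ) ≤ (K.card : ℤ) := by exact_mod_cast hδcκ
  have hcτ : (T'.card : ℤ) + (W.card : ℤ) + 2 = (r x : ℤ) := by exact_mod_cast hT'card
  have hcs : (S0.card : ℤ) + (K.card : ℤ) + 2 = (c y : ℤ) := by exact_mod_cast hS0card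
  have hcrx : (r x : ℤ) ≤ (Δr : ℤ) := by exact_mod_cast hΔr x
  have hccy : (c y : ℤ) ≤ (Δc : ℤ) := by exact_mod_cast hΔc y
  have hcM : (M.card : ℤ) + (W.card : ℤ) + 1 = (n : ℤ) := by exact_mod_cast hMcard
  have hcM' : (M'.card : ℤ) + (K.card : ℤ) + 1 = (m : ℤ) := by exact_mod_cast hM'card
  have hτnn : (0 : ℤ) ≤ (T'.card : ℤ) := Int.ofNat_nonneg _
  have hsnn : (0 : ℤ) ≤ (S0.card : ℤ) := Int.ofNat_nonneg _
  have hω1 : (δc : ℤ) * (M.card : ℤ) ≤ (S0.card : ℤ) * T'.card + T'.card +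
      (K.card : ℤ) * ((Δr : ℤ) - 1 - W.card) := by
    have h := le_trans hcol1 hrow1
    have hsub : (W.card + 1) ≤ Δr := by omega
    have hcast : ((Δr - (W.card + 1) : ℕ) : ℤ) = (Δr : ℤ) - 1 - W.card := by
      rw [Nat.cast_sub hsub]
      push_cast
      ring
    calc (δc : ℤ) * (M.card : ℤ)
        = ((δc * M.card : ℕ) : ℤ) := by push_cast; ring
    _ ≤ ((S0.card * T'.card + T'.card + K.card * (Δr - (W.card + 1)) : ℕ) : ℤ) := by
        exact_mod_cast h
    _ = (S0.card : ℤ) * T'.card + T'.card + (K.card : ℤ) * ((Δr : ℤ) - 1 - W.card) := by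
        push_cast [Nat.cast_sub hsub]
        ring
  have hω2 : (δr : ℤ) * (M'.card : ℤ) ≤ ((T'.card : ℤ) + 1) * S0.card +
      (W.card : ℤ) * ((Δc : ℤ) - 1 - K.card) := by
    have h := le_trans hrow2 hcol2
    have hsub : (K.card + 1) ≤ Δc := by omega
    calc (δr : ℤ) * (M'.card : ℤ)
        = ((δr * M'.card : ℕ) : ℤ) := by push_cast; ring
    _ ≤ (((T'.card + 1) * S0.card + W.card * (Δc - (K.card + 1)) : ℕ) : ℤ) := by
        exact_mod_cast h
    _ = ((T'.card : ℤ) + 1) * S0.card + (W.card : ℤ) * ((Δc : ℤ) - 1 - K.card) := by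
        push_cast [Nat.cast_sub hsub]
        ring
  have h5 : (T'.card : ℤ) + (W.card : ℤ) + 2 ≤ (Δr : ℤ) := by rw [hcτ]; exact hcrx
  have h6 : (S0.card : ℤ) + (K.card : ℤ) + 2 ≤ (Δc : ℤ) := by rw [hcs]; exact hccy
  have hω2' : (δr : ℤ) * (M'.card : ℤ) ≤ (T'.card : ℤ) * S0.card + S0.card +
      (W.card : ℤ) * ((Δc : ℤ) - 1 - K.card) :=
    hω2.trans (le_of_eq (by ring))
  rcases le_max_iff.mp hab with hcase | hcase
  · exact endgame1 hcw hcκ hcδr hcδc h5 h6 hτnn hsnn hcM hω1 hcase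
  · have hcase' : ((Δr : ℤ) - δr - 1) * ((Δc : ℤ) - δc - 1) ≤ (δr : ℤ) * ((m : ℤ) - Δc) := by
      rw [mul_comm]; exact hcase
    exact endgame1 hcκ hcw hcδc hcδr h6 h5 hsnn hτnn hcM' hω2' hcase'

end Helpers
/-- Corollary B.3. If
`(Δ_c − δ_c − 1)(Δ_r − δ_r − 1) < 1 + max{δ_c(n − Δ_r), δ_r(m − Δ_c)}`, then
`k_JS(r,c) ≤ 8`. -/
theorem stmt7 {m n : ℕ} (r : Fin m → ℕ) (c : Fin n → ℕ) (δr Δr δc Δc : ℕ)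
    (hrpos : ∀ i, 1 ≤ r i) (hcpos : ∀ j, 1 ≤ c j)
    (hgraphical : ∃ B : BipGraph m n, memB r c B)
    (hδr : ∀ i, δr ≤ r i) (hδr' : ∃ i, r i = δr)
    (hΔr : ∀ i, r i ≤ Δr) (hΔr' : ∃ i, r i = Δr)
    (hδc : ∀ j, δc ≤ c j) (hδc' : ∃ j, c j = δc)
    (hΔc : ∀ j, c j ≤ Δc) (hΔc' : ∃ j, c j = Δc)
    (hineq : ((Δc : ℤ) - (δc : ℤ) - 1) * ((Δr : ℤ) - (δr : ℤ) - 1) <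
      1 + max ((δc : ℤ) * ((n : ℤ) - (Δr : ℤ))) ((δr : ℤ) * ((m : ℤ) - (Δc : ℤ)))) :
    ∀ B : BipGraph m n, memB' r c B →
      ∃ B' : BipGraph m n, memB r c B' ∧ bjsDistLe r c 8 B B' := by
  intro B hB'
  by_cases hB : memB r c B
  · exact ⟨B, hB, 0, by norm_num, bjsChain_zero (Or.inl hB)⟩
  · obtain ⟨x, y, hx, hy, hVi, hUj⟩ := hB'.resolve_left hB
    have hmemB' : memB' r c B := Or.inr ⟨x, y, hx, hy, hVi, hUj⟩
    by_cases hxy : (x, y) ∈ B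
    · -- hard case
      by_cases hP1 : ∃ (j : Fin n) (k : Fin m), (x, j) ∉ B ∧ (k, j) ∈ B ∧ (k, y) ∉ B
      · -- two-step plan
        obtain ⟨j, k, hxj, hkj, hky⟩ := hP1
        have hjy : j ≠ y := fun h => hxj (h ▸ hxy)
        obtain ⟨hstep1, hVk1, hUy1, hVi1, hUj1, hmem1⟩ :=
          swap_facts hx hy hVi hUj hxj hkj hjy
        set B1 := (insert (x, j) B).erase (k, j) with hB1def
        have hky1 : (k, y) ∉ B1 := by
          intro hmem
          rcases (hmem1 (k, y)).mp hmem with ⟨h1, _⟩ | h2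
          · exact hky h1
          · exact hjy (congrArg Prod.snd h2).symm
        obtain ⟨hstep2, hmemB2⟩ := fill_facts hVk1 hUy1 hVi1 hUj1 hky1
        have hmem1' : memB' r c B1 := Or.inr ⟨k, y, hVk1, hUy1, hVi1, hUj1⟩
        refine ⟨insert (k, y) B1, hmemB2, 2, by norm_num, ?_⟩
        exact bjsChain_cons hmemB' (Or.inl hstep1)
          (bjsChain_cons hmem1' (Or.inl hstep2) (bjsChain_zero (Or.inl hmemB2)))
      · by_cases hP2 : ∃ (j1 : Fin n) (k1 : Fin m) (j2 : Fin n) (k2 : Fin m),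
            (x, j1) ∉ B ∧ (k1, j1) ∈ B ∧ j2 ≠ y ∧ j2 ≠ j1 ∧ (k1, j2) ∉ B ∧
            (k2, j2) ∈ B ∧ (k2, y) ∉ B
        · -- three-step plan
          obtain ⟨j1, k1, j2, k2, hxj1, hkj1, hj2y, hj2j1, hk1j2, hk2j2, hk2y⟩ := hP2
          have hj1y : j1 ≠ y := fun h => hxj1 (h ▸ hxy)
          obtain ⟨hstep1, hVk1, hUy1, hVi1, hUj1, hmem1⟩ :=
            swap_facts hx hy hVi hUj hxj1 hkj1 hj1y
          set B1 := (insert (x, j1) B).erase (k1, j1) with hB1def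
          have hk1j2' : (k1, j2) ∉ B1 := by
            intro hmem
            rcases (hmem1 (k1, j2)).mp hmem with ⟨h1, _⟩ | h2
            · exact hk1j2 h1
            · exact hj2j1 (congrArg Prod.snd h2)
          have hk2j2' : (k2, j2) ∈ B1 := by
            refine (hmem1 (k2, j2)).mpr (Or.inl ⟨hk2j2, ?_⟩)
            intro h
            exact hj2j1 (congrArg Prod.snd h)
          obtain ⟨hstep2, hVk2, hUy2, hVi2, hUj2, hmem2⟩ :=
            swap_facts hVk1 hUy1 hVi1 hUj1 hk1j2' hk2j2' hj2y
          set B2 := (insert (k1, j2) B1).erase (k2, j2) with hB2def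
          have hk2y' : (k2, y) ∉ B2 := by
            intro hmem
            rcases (hmem2 (k2, y)).mp hmem with ⟨h1, _⟩ | h2
            · rcases (hmem1 (k2, y)).mp h1 with ⟨h3, _⟩ | h4
              · exact hk2y h3
              · exact hj1y (congrArg Prod.snd h4).symm
            · exact hj2y (congrArg Prod.snd h2).symm
          obtain ⟨hstep3, hmemB3⟩ := fill_facts hVk2 hUy2 hVi2 hUj2 hk2y'
          have hmem1' : memB' r c B1 := Or.inr ⟨k1, y, hVk1, hUy1, hVi1, hUj1⟩
          have hmem2' : memB' r c B2 := Or.inr ⟨k2, y, hVk2, hUy2, hVi2, hUj2⟩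
          refine ⟨insert (k2, y) B2, hmemB3, 3, by norm_num, ?_⟩
          exact bjsChain_cons hmemB' (Or.inl hstep1)
            (bjsChain_cons hmem1' (Or.inl hstep2)
              (bjsChain_cons hmem2' (Or.inl hstep3) (bjsChain_zero (Or.inl hmemB3))))
        · exact absurd (core_contradiction δr Δr δc Δc hgraphical hδr hΔr hδc hΔc
            hrpos hcpos hineq hx hy hVi hUj hxy hP1 hP2) (fun h => h)
    · -- easy case: one step
      obtain ⟨hstep, hmemB1⟩ := fill_facts hx hy hVi hUj hxy
      exact ⟨insert (x, y) B, hmemB1, 1, by norm_num,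
        bjsChain_cons hmemB' (Or.inl hstep) (bjsChain_zero (Or.inl hmemB1))⟩
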